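/- Let φ be a repulsive, tempered potential on ℝ^d with C_φ := ∫_{ℝ^d}(1−e^{−φ(x)})dx, and let Λ ⊂ ℝ^d be a region with |Λ| > 0. For real λ ≥ 0 set Z_Λ(λ) = Σ_{k≥0} (λ^k/k!) ∫_{Λ^k} ∏_{1≤i<j≤k} e^{−φ(x_i−x_j)} dx_1⋯dx_k and Z′_Λ(λ) = Σ_{k≥1} (λ^{k−1}/(k−1)!) ∫_{Λ^k} ∏_{1≤i<j≤k} e^{−φ(x_i−x_j)} dx_1⋯dx_k (the derivative of Z_Λ in λ). Then the finite volume density ρ_Λ(λ) := λ·Z′_Λ(λ)/(|Λ|·Z_Λ(λ)) satisfies ρ_Λ(λ) ≥ λ/(1 + λ·C_φ). (Lemma 5.3.) -/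

import Mathlib

open MeasureTheory Filter

noncomputable section

/-- Euclidean space ℝ^d. -/
abbrev Euc (d : ℕ) := EuclideanSpace ℝ (Fin d)

/-- `e^{-t}` for `t ∈ [0,∞]`, with the convention `e^{-∞} = 0`. -/
def expNeg (t : ENNReal) : ℝ := if t = ⊤ then 0 else Real.exp (-t.toReal)

/-- The Boltzmann pair weight `∏_{1 ≤ i < j ≤ k} e^{-φ(x_i - x_j)}`. -/
def pairWeight {d : ℕ} (φ : Euc d → ENNReal) (k : ℕ) (x : Fin k → Euc d) : ℝ :=
  ∏ p ∈ Finset.univ.filter (fun p : Fin k × Fin k => p.1 < p.2), expNeg (φ (x p.1 - x p.2))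

/-- The grand canonical partition function `Z_Λ(λ)` at constant real activity `λ`. -/
def Zreal {d : ℕ} (φ : Euc d → ENNReal) (Λ : Set (Euc d)) (lam : ℝ) : ℝ :=
  ∑' k : ℕ, lam ^ k / (Nat.factorial k) *
    ∫ x in Set.univ.pi (fun _ : Fin k => Λ), pairWeight φ k x

/-- The derivative of the partition function in `λ`:
`Z′_Λ(λ) = Σ_{k≥1} λ^{k−1}/(k−1)! ∫_{Λ^k} ∏_{i<j} e^{−φ(x_i−x_j)}`
(reindexed as a sum over `k ≥ 0` of terms with `k+1` points). -/
def Zreal' {d : ℕ} (φ : Euc d → ENNReal) (Λ : Set (Euc d)) (lam : ℝ) : ℝ :=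
  ∑' k : ℕ, lam ^ k / (Nat.factorial k) *
    ∫ x in Set.univ.pi (fun _ : Fin (k + 1) => Λ), pairWeight φ (k + 1) x

lemma expNeg_nonneg (t : ENNReal) : 0 ≤ expNeg t := by
  unfold expNeg; split
  · exact le_refl _
  · exact (Real.exp_pos _).le

lemma expNeg_le_one (t : ENNReal) : expNeg t ≤ 1 := by
  unfold expNeg; split
  · norm_num
  · exact Real.exp_le_one_iff.2 (by simp [ENNReal.toReal_nonneg])

lemma measurable_expNeg : Measurable expNeg := by
  unfold expNeg
  have h : MeasurableSet {t : ENNReal | t = ⊤} := measurableSet_eq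
  exact Measurable.ite h measurable_const
    (Real.measurable_exp.comp (measurable_neg.comp ENNReal.measurable_toReal))

lemma pairWeight_nonneg {d : ℕ} (φ : Euc d → ENNReal) (k : ℕ) (x : Fin k → Euc d) :
    0 ≤ pairWeight φ k x :=
  Finset.prod_nonneg fun _ _ => expNeg_nonneg _

lemma pairWeight_le_one {d : ℕ} (φ : Euc d → ENNReal) (k : ℕ) (x : Fin k → Euc d) :
    pairWeight φ k x ≤ 1 :=
  Finset.prod_le_one (fun _ _ => expNeg_nonneg _) (fun _ _ => expNeg_le_one _)

lemma measurable_pairWeight {d : ℕ} {φ : Euc d → ENNReal} (hφ : Measurable φ) (k : ℕ) :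
    Measurable (pairWeight φ k) := by
  apply Finset.measurable_prod
  intro p _
  exact measurable_expNeg.comp <| hφ.comp <|
    (measurable_pi_apply p.1).sub (measurable_pi_apply p.2)

lemma one_sub_sum_le_prod {ι : Type*} (s : Finset ι) (f : ι → ℝ)
    (h0 : ∀ i ∈ s, 0 ≤ f i) (h1 : ∀ i ∈ s, f i ≤ 1) :
    1 - ∑ i ∈ s, (1 - f i) ≤ ∏ i ∈ s, f i := by
  classical
  induction s using Finset.induction_on with
  | empty => simp
  | @insert a s' hx ih =>
    rw [Finset.sum_insert hx, Finset.prod_insert hx]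
    have h0a := h0 a (Finset.mem_insert_self _ _)
    have h1a := h1 a (Finset.mem_insert_self _ _)
    have ihs := ih (fun i hi => h0 i (Finset.mem_insert_of_mem hi))
      (fun i hi => h1 i (Finset.mem_insert_of_mem hi))
    have hprod0 : (0:ℝ) ≤ ∏ i ∈ s', f i :=
      Finset.prod_nonneg fun i hi => h0 i (Finset.mem_insert_of_mem hi)
    have hprod1 : ∏ i ∈ s', f i ≤ 1 :=
      Finset.prod_le_one (fun i hi => h0 i (Finset.mem_insert_of_mem hi))
        (fun i hi => h1 i (Finset.mem_insert_of_mem hi))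
    nlinarith

lemma restrict_pi_pi {ι : Type*} [Fintype ι] {α : ι → Type*} [∀ i, MeasurableSpace (α i)]
    (μ : ∀ i, Measure (α i)) [∀ i, SigmaFinite (μ i)] (s : ∀ i, Set (α i)) :
    (Measure.pi μ).restrict (Set.univ.pi s) = Measure.pi (fun i => (μ i).restrict (s i)) := by
  refine (Measure.pi_eq fun t ht => ?_).symm
  rw [Measure.restrict_apply (MeasurableSet.univ_pi ht)]
  rw [← Set.pi_inter_distrib, Measure.pi_pi]
  simp_rw [Measure.restrict_apply (ht _)]

lemma pairs_succ (k : ℕ) :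
    (Finset.univ.filter (fun p : Fin (k+1) × Fin (k+1) => p.1 < p.2)) =
      (Finset.univ.image fun j : Fin k => ((0 : Fin (k+1)), j.succ)) ∪
      ((Finset.univ.filter (fun p : Fin k × Fin k => p.1 < p.2)).image
        (fun q => (q.1.succ, q.2.succ))) := by
  ext p
  simp only [Finset.mem_filter, Finset.mem_univ, true_and, Finset.mem_union, Finset.mem_image]
  constructor
  · intro hp
    rcases Fin.eq_zero_or_eq_succ p.1 with h1 | ⟨i, h1⟩
    · rcases Fin.eq_zero_or_eq_succ p.2 with h2 | ⟨j, h2⟩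
      · rw [h1, h2] at hp; exact absurd hp (lt_irrefl _)
      · exact Or.inl ⟨j, by rw [← h1, ← h2]⟩
    · rcases Fin.eq_zero_or_eq_succ p.2 with h2 | ⟨j, h2⟩
      · rw [h1, h2] at hp; exact absurd hp (by simp [Fin.lt_def])
      · refine Or.inr ⟨(i, j), ?_, ?_⟩
        · rw [h1, h2] at hp; simpa [Fin.succ_lt_succ_iff] using hp
        · simp [← h1, ← h2]
  · rintro (⟨j, rfl⟩ | ⟨q, hq, rfl⟩)
    · exact Fin.succ_pos j
    · simpa [Fin.succ_lt_succ_iff] using hq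

lemma prod_pairs_succ {M : Type*} [CommMonoid M] (k : ℕ) (f : Fin (k+1) × Fin (k+1) → M) :
    ∏ p ∈ Finset.univ.filter (fun p : Fin (k+1) × Fin (k+1) => p.1 < p.2), f p =
      (∏ j : Fin k, f (0, j.succ)) *
      ∏ q ∈ Finset.univ.filter (fun q : Fin k × Fin k => q.1 < q.2), f (q.1.succ, q.2.succ) := by
  rw [pairs_succ, Finset.prod_union, Finset.prod_image, Finset.prod_image]
  · intro a _ b _ h
    have h1 := congrArg Prod.fst h
    have h2 := congrArg Prod.snd h
    simp only at h1 h2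
    exact Prod.ext (Fin.succ_injective _ h1) (Fin.succ_injective _ h2)
  · intro a _ b _ h
    exact Fin.succ_injective _ (congrArg Prod.snd h)
  · rw [Finset.disjoint_left]
    rintro p hp hq
    simp only [Finset.mem_image, Finset.mem_univ] at hp hq
    obtain ⟨j, _, rfl⟩ := hp
    obtain ⟨q, _, h⟩ := hq
    exact (Fin.succ_ne_zero q.1 (congrArg Prod.fst h)).elim

lemma pairWeight_cons {d : ℕ} (φ : Euc d → ENNReal) (k : ℕ) (y : Euc d) (z : Fin k → Euc d) :
    pairWeight φ (k+1) (Fin.cons y z) =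
      (∏ j, expNeg (φ (y - z j))) * pairWeight φ k z := by
  unfold pairWeight
  rw [prod_pairs_succ]
  congr 1

lemma cons_eq_insertNth {n : ℕ} {α : Type*} (y : α) (z : Fin n → α) :
    Fin.insertNth 0 y z = (Fin.cons y z : Fin (n+1) → α) := by
  funext j
  cases j using Fin.cases <;> simp

/-- Key single-step inequality: `|Λ| I_k ≤ I_{k+1} + k C_φ I_k`. -/
lemma key_step {d : ℕ} (φ : Euc d → ENNReal) (hφmeas : Measurable φ)
    (hφtemp : Integrable (fun x : Euc d => 1 - expNeg (φ x)))
    (Cφ : ℝ) (hC : Cφ = ∫ x : Euc d, (1 - expNeg (φ x)))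
    (Λ : Set (Euc d)) (hΛmeas : MeasurableSet Λ) (hΛbdd : Bornology.IsBounded Λ)
    (k : ℕ) :
    (volume Λ).toReal * (∫ x in Set.univ.pi (fun _ : Fin k => Λ), pairWeight φ k x)
      ≤ (∫ x in Set.univ.pi (fun _ : Fin (k+1) => Λ), pairWeight φ (k+1) x)
        + k * Cφ * (∫ x in Set.univ.pi (fun _ : Fin k => Λ), pairWeight φ k x) := by
  set V : ℝ := (volume Λ).toReal with hV
  set μ : Measure (Euc d) := volume.restrict Λ with hμ
  haveI : IsFiniteMeasure μ := ⟨by rw [Measure.restrict_apply_univ]; exact hΛbdd.measure_lt_top⟩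
  set ν : Measure (Fin k → Euc d) := Measure.pi (fun _ => μ) with hν
  -- rewrite I_k
  have hIk : (∫ x in Set.univ.pi (fun _ : Fin k => Λ), pairWeight φ k x)
      = ∫ z, pairWeight φ k z ∂ν := by
    rw [hν, hμ, ← restrict_pi_pi (fun _ : Fin k => (volume : Measure (Euc d)))
      (fun _ => Λ), ← volume_pi]
  -- rewrite I_{k+1} as an integral over the product
  set F : Euc d × (Fin k → Euc d) → ℝ :=
    fun p => pairWeight φ (k+1) (Fin.cons p.1 p.2) with hF
  have hFe : F = (pairWeight φ (k+1)) ∘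
      ⇑(MeasurableEquiv.piFinSuccAbove (fun _ : Fin (k+1) => Euc d) 0).symm := by
    funext p
    obtain ⟨y, z⟩ := p
    simp [hF, MeasurableEquiv.piFinSuccAbove, Fin.insertNthEquiv, Fin.consEquiv]
  have hFmeas : Measurable F := by
    rw [hFe]
    exact (measurable_pairWeight hφmeas (k+1)).comp (MeasurableEquiv.measurable _)
  have hFint : Integrable F (μ.prod ν) := by
    refine (integrable_const (1:ℝ)).mono' hFmeas.aestronglyMeasurable ?_
    filter_upwards with p
    rw [Real.norm_eq_abs, abs_of_nonneg (pairWeight_nonneg _ _ _)]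
    exact pairWeight_le_one _ _ _
  have hmp := measurePreserving_piFinSuccAbove (fun _ : Fin (k+1) => μ) 0
  set e := MeasurableEquiv.piFinSuccAbove (fun _ : Fin (k+1) => Euc d) 0 with he
  have hIk1 : (∫ x in Set.univ.pi (fun _ : Fin (k+1) => Λ), pairWeight φ (k+1) x)
      = ∫ p, F p ∂(μ.prod ν) := by
    have h1 : (∫ x in Set.univ.pi (fun _ : Fin (k+1) => Λ), pairWeight φ (k+1) x)
        = ∫ x, pairWeight φ (k+1) x ∂(Measure.pi (fun _ : Fin (k+1) => μ)) := by
      rw [hμ, ← restrict_pi_pi (fun _ : Fin (k+1) => (volume : Measure (Euc d)))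
        (fun _ => Λ), ← volume_pi]
    rw [h1, hFe]
    have h2 := hmp.integral_comp' (f := e) ((pairWeight φ (k+1)) ∘ ⇑e.symm)
    calc ∫ x, pairWeight φ (k+1) x ∂(Measure.pi (fun _ : Fin (k+1) => μ))
        = ∫ x, ((pairWeight φ (k+1)) ∘ ⇑e.symm) (e x)
            ∂(Measure.pi (fun _ : Fin (k+1) => μ)) := by simp
      _ = ∫ p, ((pairWeight φ (k+1)) ∘ ⇑e.symm) p ∂(μ.prod ν) := h2
  rw [hIk, hIk1, integral_prod_symm F hFint]
  have hw : ∀ z : Fin k → Euc d, (∫ y, F (y, z) ∂μ)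
      = (∫ y, ∏ j, expNeg (φ (y - z j)) ∂μ) * pairWeight φ k z := by
    intro z
    simp only [hF]
    simp_rw [pairWeight_cons]
    exact integral_mul_const _ _
  set G : (Fin k → Euc d) → ℝ := fun z => ∫ y, ∏ j, expNeg (φ (y - z j)) ∂μ with hG
  have hGlb : ∀ z : Fin k → Euc d, V - k * Cφ ≤ G z := by
    intro z
    have hsub_int : ∀ a : Euc d, Integrable (fun y => 1 - expNeg (φ (y - a))) μ := by
      intro a
      exact (hφtemp.comp_sub_right a).integrableOn
    have hsum_int : Integrable (fun y => ∑ j, (1 - expNeg (φ (y - z j)))) μ :=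
      integrable_finset_sum _ (fun j _ => hsub_int (z j))
    have hlow_int : Integrable (fun y => 1 - ∑ j, (1 - expNeg (φ (y - z j)))) μ :=
      (integrable_const 1).sub hsum_int
    have hprod_meas : Measurable (fun y : Euc d => ∏ j, expNeg (φ (y - z j))) := by
      apply Finset.measurable_prod
      intro j _
      exact measurable_expNeg.comp (hφmeas.comp (measurable_id.sub measurable_const))
    have hprod_int : Integrable (fun y : Euc d => ∏ j, expNeg (φ (y - z j))) μ := by
      refine (integrable_const (1:ℝ)).mono' hprod_meas.aestronglyMeasurable ?_
      filter_upwards with y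
      rw [Real.norm_eq_abs, abs_of_nonneg (Finset.prod_nonneg fun _ _ => expNeg_nonneg _)]
      exact Finset.prod_le_one (fun _ _ => expNeg_nonneg _) (fun _ _ => expNeg_le_one _)
    have h1 : (∫ y, (1 - ∑ j, (1 - expNeg (φ (y - z j)))) ∂μ) ≤ G z := by
      refine integral_mono hlow_int hprod_int (fun y => ?_)
      exact one_sub_sum_le_prod _ _ (fun j _ => expNeg_nonneg _) (fun j _ => expNeg_le_one _)
    have h2 : (∫ y, (1 - ∑ j, (1 - expNeg (φ (y - z j)))) ∂μ)
        = V - ∑ j : Fin k, ∫ y, (1 - expNeg (φ (y - z j))) ∂μ := by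
      rw [integral_sub (integrable_const 1) hsum_int, integral_finset_sum _
        (fun j _ => hsub_int (z j))]
      congr 1
      simp [hμ, hV, Measure.restrict_apply_univ]; rfl
    have h3 : ∀ a : Euc d, (∫ y, (1 - expNeg (φ (y - a))) ∂μ) ≤ Cφ := by
      intro a
      have hle : (∫ y, (1 - expNeg (φ (y - a))) ∂μ)
          ≤ ∫ y, (1 - expNeg (φ (y - a))) := by
        rw [hμ]
        refine setIntegral_le_integral (hφtemp.comp_sub_right a) ?_
        filter_upwards with y
        have := expNeg_le_one (φ (y - a))
        simp only [Pi.zero_apply]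
        linarith
      rw [hC]
      calc (∫ y, (1 - expNeg (φ (y - a))) ∂μ) ≤ _ := hle
        _ = ∫ x : Euc d, (1 - expNeg (φ x)) :=
          integral_sub_right_eq_self (fun x => 1 - expNeg (φ x)) a
    have h4 : ∑ j : Fin k, (∫ y, (1 - expNeg (φ (y - z j))) ∂μ) ≤ (k : ℝ) * Cφ := by
      calc ∑ j : Fin k, (∫ y, (1 - expNeg (φ (y - z j))) ∂μ)
          ≤ ∑ _j : Fin k, Cφ := Finset.sum_le_sum (fun j _ => h3 (z j))
        _ = (k : ℝ) * Cφ := by simp [mul_comm]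
    rw [h2] at h1
    linarith
  have hwk : Integrable (pairWeight φ k) ν := by
    refine (integrable_const (1:ℝ)).mono'
      (measurable_pairWeight hφmeas k).aestronglyMeasurable ?_
    filter_upwards with z
    rw [Real.norm_eq_abs, abs_of_nonneg (pairWeight_nonneg _ _ _)]
    exact pairWeight_le_one _ _ _
  have hwfun : Integrable (fun z => ∫ y, F (y, z) ∂μ) ν := hFint.integral_prod_right
  have hmain : (V - k * Cφ) * (∫ z, pairWeight φ k z ∂ν)
      ≤ ∫ z, (∫ y, F (y, z) ∂μ) ∂ν := by
    rw [← integral_const_mul]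
    refine integral_mono (hwk.const_mul _) hwfun (fun z => ?_)
    rw [hw z]
    exact mul_le_mul_of_nonneg_right (hGlb z) (pairWeight_nonneg _ _ _)
  nlinarith [hmain]


lemma I_eq_pi {d : ℕ} (φ : Euc d → ENNReal) (Λ : Set (Euc d)) (k : ℕ) :
    (∫ x in Set.univ.pi (fun _ : Fin k => Λ), pairWeight φ k x)
      = ∫ z, pairWeight φ k z ∂(Measure.pi (fun _ : Fin k => volume.restrict Λ)) := by
  rw [← restrict_pi_pi (fun _ : Fin k => (volume : Measure (Euc d))) (fun _ => Λ), ← volume_pi]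

lemma I_nonneg {d : ℕ} (φ : Euc d → ENNReal) (Λ : Set (Euc d)) (hΛmeas : MeasurableSet Λ)
    (k : ℕ) : 0 ≤ ∫ x in Set.univ.pi (fun _ : Fin k => Λ), pairWeight φ k x :=
  setIntegral_nonneg (MeasurableSet.univ_pi fun _ => hΛmeas)
    (fun x _ => pairWeight_nonneg _ _ _)

lemma I_le_pow {d : ℕ} (φ : Euc d → ENNReal) (hφmeas : Measurable φ) (Λ : Set (Euc d))
    (hΛbdd : Bornology.IsBounded Λ) (k : ℕ) :
    (∫ x in Set.univ.pi (fun _ : Fin k => Λ), pairWeight φ k x) ≤ (volume Λ).toReal ^ k := by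
  rw [I_eq_pi]
  set μ : Measure (Euc d) := volume.restrict Λ with hμ
  haveI : IsFiniteMeasure μ := ⟨by rw [Measure.restrict_apply_univ]; exact hΛbdd.measure_lt_top⟩
  have hwk : Integrable (pairWeight φ k) (Measure.pi (fun _ : Fin k => μ)) := by
    refine (integrable_const (1:ℝ)).mono'
      (measurable_pairWeight hφmeas k).aestronglyMeasurable ?_
    filter_upwards with z
    rw [Real.norm_eq_abs, abs_of_nonneg (pairWeight_nonneg _ _ _)]
    exact pairWeight_le_one _ _ _
  calc (∫ z, pairWeight φ k z ∂(Measure.pi (fun _ : Fin k => μ)))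
      ≤ ∫ _z, (1:ℝ) ∂(Measure.pi (fun _ : Fin k => μ)) :=
        integral_mono hwk (integrable_const 1) (fun z => pairWeight_le_one _ _ _)
    _ = ((Measure.pi (fun _ : Fin k => μ)) Set.univ).toReal := by simp; rfl
    _ = (volume Λ).toReal ^ k := by
        rw [Measure.pi_univ]
        simp [hμ, Measure.restrict_apply_univ, ENNReal.toReal_prod]

lemma I_zero {d : ℕ} (φ : Euc d → ENNReal) (Λ : Set (Euc d))
    (hΛbdd : Bornology.IsBounded Λ) :
    (∫ x in Set.univ.pi (fun _ : Fin 0 => Λ), pairWeight φ 0 x) = 1 := by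
  rw [I_eq_pi]
  set μ : Measure (Euc d) := volume.restrict Λ with hμ
  haveI : IsFiniteMeasure μ := ⟨by rw [Measure.restrict_apply_univ]; exact hΛbdd.measure_lt_top⟩
  have h1 : ∀ z : Fin 0 → Euc d, pairWeight φ 0 z = 1 := by
    intro z
    unfold pairWeight
    apply Finset.prod_eq_one
    intro p _
    exact absurd p.1.2 (by omega)
  simp_rw [h1]
  rw [integral_const]
  rw [measureReal_def, Measure.pi_univ]
  simp

/-- Lemma 5.3: the finite volume density `ρ_Λ(λ) = λ Z′_Λ(λ)/(|Λ| Z_Λ(λ))`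
satisfies `ρ_Λ(λ) ≥ λ/(1 + λ C_φ)`. -/
theorem finite_volume_density_lower_bound
    (d : ℕ) (hd : 1 ≤ d)
    (φ : Euc d → ENNReal) (hφmeas : Measurable φ)
    (hφsymm : ∀ x, φ (-x) = φ x)
    (hφtemp : Integrable (fun x : Euc d => 1 - expNeg (φ x)))
    (Cφ : ℝ) (hC : Cφ = ∫ x : Euc d, (1 - expNeg (φ x)))
    (Λ : Set (Euc d)) (hΛmeas : MeasurableSet Λ) (hΛbdd : Bornology.IsBounded Λ)
    (hΛpos : 0 < (volume Λ).toReal)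
    (lam : ℝ) (hlam : 0 ≤ lam) :
    lam / (1 + lam * Cφ) ≤
      lam * Zreal' φ Λ lam / ((volume Λ).toReal * Zreal φ Λ lam) := by
  set V : ℝ := (volume Λ).toReal with hV
  set I : ℕ → ℝ := fun k => ∫ x in Set.univ.pi (fun _ : Fin k => Λ), pairWeight φ k x with hI
  set a : ℕ → ℝ := fun k => lam ^ k / (Nat.factorial k) * I k with ha
  set b : ℕ → ℝ := fun k => lam ^ k / (Nat.factorial k) * I (k + 1) with hb
  have hInn : ∀ k, 0 ≤ I k := fun k => I_nonneg φ Λ hΛmeas k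
  have hIle : ∀ k, I k ≤ V ^ k := fun k => I_le_pow φ hφmeas Λ hΛbdd k
  have hVpos : 0 < V := hΛpos
  have hfacpos : ∀ k : ℕ, (0:ℝ) < (Nat.factorial k : ℝ) := fun k =>
    Nat.cast_pos.2 (Nat.factorial_pos k)
  have ha_nonneg : ∀ k, 0 ≤ a k := fun k =>
    mul_nonneg (div_nonneg (pow_nonneg hlam k) (hfacpos k).le) (hInn k)
  have hb_nonneg : ∀ k, 0 ≤ b k := fun k =>
    mul_nonneg (div_nonneg (pow_nonneg hlam k) (hfacpos k).le) (hInn (k+1))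
  have ha_le : ∀ k, a k ≤ (lam * V) ^ k / (Nat.factorial k) := by
    intro k
    rw [ha, mul_pow]
    calc lam ^ k / (Nat.factorial k) * I k
        ≤ lam ^ k / (Nat.factorial k) * V ^ k := by
          apply mul_le_mul_of_nonneg_left (hIle k)
          exact div_nonneg (pow_nonneg hlam k) (hfacpos k).le
      _ = lam ^ k * V ^ k / (Nat.factorial k) := by ring
  have hb_le : ∀ k, b k ≤ V * ((lam * V) ^ k / (Nat.factorial k)) := by
    intro k
    rw [hb, mul_pow]
    calc lam ^ k / (Nat.factorial k) * I (k+1)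
        ≤ lam ^ k / (Nat.factorial k) * V ^ (k+1) := by
          apply mul_le_mul_of_nonneg_left (hIle (k+1))
          exact div_nonneg (pow_nonneg hlam k) (hfacpos k).le
      _ = V * (lam ^ k * V ^ k / (Nat.factorial k)) := by ring
  have hsummable_ref := Real.summable_pow_div_factorial (lam * V)
  have ha_sum : Summable a := Summable.of_nonneg_of_le ha_nonneg ha_le hsummable_ref
  have hb_sum : Summable b :=
    Summable.of_nonneg_of_le hb_nonneg hb_le (hsummable_ref.mul_left V)
  set g : ℕ → ℝ := fun k => (k : ℝ) * a k with hg
  have hg_succ : ∀ k : ℕ, g (k + 1) = lam * b k := by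
    intro k
    rw [hg, ha, hb]
    have hfs : ((k+1 : ℕ) : ℝ) * (lam^(k+1) / ((Nat.factorial (k+1) : ℕ) : ℝ))
        = lam * (lam^k / (Nat.factorial k)) := by
      rw [Nat.factorial_succ]
      push_cast
      have h1 : (Nat.factorial k : ℝ) ≠ 0 := Nat.cast_ne_zero.2 (Nat.factorial_ne_zero k)
      have h2 : ((k:ℝ)+1) ≠ 0 := by positivity
      field_simp
      ring
    push_cast at hfs ⊢
    calc ((k:ℝ)+1) * (lam^(k+1) / (Nat.factorial (k+1)) * I (k+1))
        = (((k:ℝ)+1) * (lam^(k+1) / (Nat.factorial (k+1)))) * I (k+1) := by ring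
      _ = (lam * (lam^k / (Nat.factorial k))) * I (k+1) := by rw [← hfs]
      _ = lam * (lam^k / (Nat.factorial k) * I (k+1)) := by ring
  have hg_sum : Summable g := by
    apply (summable_nat_add_iff 1).mp
    have : (fun k => g (k + 1)) = fun k => lam * b k := funext hg_succ
    rw [this]
    exact hb_sum.mul_left lam
  have htsum_g : ∑' k, g k = lam * Zreal' φ Λ lam := by
    rw [Summable.tsum_eq_zero_add hg_sum]
    have h0 : g 0 = 0 := by simp [hg]
    have : (fun k => g (k + 1)) = fun k => lam * b k := funext hg_succ
    rw [h0, this, tsum_mul_left, zero_add]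
    rfl
  have hCpos : 0 ≤ Cφ := by
    rw [hC]
    apply integral_nonneg
    intro x
    have := expNeg_le_one (φ x)
    simp only [Pi.zero_apply]
    linarith
  -- the key summed inequality
  have hkey : ∀ k, V * a k ≤ b k + Cφ * g k := by
    intro k
    have hks := key_step φ hφmeas hφtemp Cφ hC Λ hΛmeas hΛbdd k
    have hcoef : 0 ≤ lam ^ k / (Nat.factorial k) :=
      div_nonneg (pow_nonneg hlam k) (hfacpos k).le
    have := mul_le_mul_of_nonneg_left hks hcoef
    calc V * a k = lam ^ k / (Nat.factorial k) * (V * I k) := by rw [ha]; ring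
      _ ≤ lam ^ k / (Nat.factorial k) * (I (k+1) + (k : ℝ) * Cφ * I k) := this
      _ = b k + Cφ * g k := by rw [hb, hg, ha]; ring
  have hsum_ineq : V * Zreal φ Λ lam ≤ Zreal' φ Λ lam + Cφ * (lam * Zreal' φ Λ lam) := by
    have h1 : V * Zreal φ Λ lam = ∑' k, V * a k := by
      rw [tsum_mul_left]; rfl
    have h2 : ∑' k, (b k + Cφ * g k) = Zreal' φ Λ lam + Cφ * (lam * Zreal' φ Λ lam) := by
      rw [Summable.tsum_add hb_sum (hg_sum.mul_left Cφ), tsum_mul_left, htsum_g]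
      rfl
    rw [h1, ← h2]
    exact Summable.tsum_le_tsum hkey (ha_sum.mul_left V) (hb_sum.add (hg_sum.mul_left Cφ))
  have hZ_ge_one : 1 ≤ Zreal φ Λ lam := by
    have h0 : a 0 = 1 := by
      simp [ha, hI, I_zero φ Λ hΛbdd]
    calc (1:ℝ) = a 0 := h0.symm
      _ ≤ ∑' k, a k := Summable.le_tsum ha_sum 0 (fun i _ => ha_nonneg i)
      _ = Zreal φ Λ lam := rfl
  have hZ'_nonneg : 0 ≤ Zreal' φ Λ lam := tsum_nonneg hb_nonneg
  have hden_pos : 0 < 1 + lam * Cφ := by positivity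
  have hVZ_pos : 0 < V * Zreal φ Λ lam := by nlinarith
  rw [div_le_div_iff₀ hden_pos hVZ_pos]
  nlinarith [mul_le_mul_of_nonneg_left hsum_ineq hlam]

end
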